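/- Every normal 2-program P with n = |At(P)| atoms has at most 3^(n/3) stable models. -/
import Mathlib


open Classical

/-- A normal program rule `head ← pos, not neg`. -/
structure PRule where
  head : ℕ
  pos : Finset ℕ
  neg : Finset ℕ
deriving DecidableEq

/-- `At(P)`: the set of atoms occurring in a normal program. -/
def pAtoms (P : Finset PRule) : Finset ℕ :=
  P.sup (fun r => insert r.head (r.pos ∪ r.neg))

/-- `N` is closed under the rules of the reduct `P^M`: whenever a rule of `P` has no negated
atom in `M` and its positive body is contained in `N`, its head belongs to `N`. -/
def closedUnder (P : Finset PRule) (M : Finset ℕ) (N : Set ℕ) : Prop :=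
  ∀ r ∈ P, (∀ b ∈ r.neg, b ∉ M) → (↑r.pos : Set ℕ) ⊆ N → r.head ∈ N

/-- `M` is a stable model of `P`: `M` equals the least set of atoms closed under the rules of
the reduct `P^M`. -/
def isStable (P : Finset PRule) (M : Finset ℕ) : Prop :=
  closedUnder P M ↑M ∧ ∀ N : Set ℕ, closedUnder P M N → ↑M ⊆ N

-- Moon–Moser part
section MM
variable (adj : ℕ → ℕ → Prop)

noncomputable def nbhd (V : Finset ℕ) (v : ℕ) : Finset ℕ :=
  V.filter (fun u => adj v u ∨ u = v)

noncomputable def misSet (V : Finset ℕ) : Finset (Finset ℕ) :=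
  V.powerset.filter
    (fun U => (∀ a ∈ U, ∀ b ∈ U, ¬ adj a b) ∧ ∀ w ∈ V, w ∉ U → ∃ u ∈ U, adj u w)

end MM

lemma cube_le_pow (k : ℕ) : k ^ 3 ≤ 3 ^ k := by
  induction k with
  | zero => norm_num
  | succ n ih =>
    rcases Nat.lt_or_ge n 3 with h | h
    · interval_cases n <;> norm_num
    · have h3 : 3 ^ (n + 1) = 3 * 3 ^ n := by ring
      rw [h3]
      have a1 : 3 * n ^ 2 ≤ n ^ 3 := by
        calc 3 * n ^ 2 ≤ n * n ^ 2 := Nat.mul_le_mul_right _ h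
          _ = n ^ 3 := by ring
      have a0 : 1 ≤ n := by omega
      have a2 : 3 * n + 1 ≤ 3 * n ^ 2 := by nlinarith
      have h4 : (n + 1) ^ 3 ≤ 3 * n ^ 3 := by
        have e : (n + 1) ^ 3 = n ^ 3 + 3 * n ^ 2 + (3 * n + 1) := by ring
        rw [e]
        omega
      calc (n + 1) ^ 3 ≤ 3 * n ^ 3 := h4
        _ ≤ 3 * 3 ^ n := Nat.mul_le_mul_left 3 ih

lemma k_le_rpow (k : ℕ) : (k : ℝ) ≤ (3 : ℝ) ^ ((k : ℝ) / 3) := by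
  have hb : (0:ℝ) ≤ 3 := by norm_num
  have h1 : ((k:ℝ)) ^ (3:ℕ) ≤ ((3:ℝ) ^ ((k:ℝ)/3)) ^ (3:ℕ) := by
    have : ((3:ℝ) ^ ((k:ℝ)/3)) ^ (3:ℕ) = (3:ℝ) ^ (k:ℝ) := by
      rw [← Real.rpow_natCast ((3:ℝ) ^ ((k:ℝ)/3)) 3, ← Real.rpow_mul hb]
      norm_num
    rw [this, Real.rpow_natCast]
    exact_mod_cast cube_le_pow k
  exact le_of_pow_le_pow_left₀ (by norm_num) (Real.rpow_nonneg hb _) h1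

theorem moon_moser (adj : ℕ → ℕ → Prop) (hs : ∀ a b, adj a b → adj b a) :
    ∀ V : Finset ℕ, ((misSet adj V).card : ℝ) ≤ 3 ^ ((V.card : ℝ) / 3) := by
  intro V
  induction V using Finset.strongInductionOn with
  | _ V ih =>
    rcases V.eq_empty_or_nonempty with rfl | hV
    · have hsub : misSet adj ∅ ⊆ {∅} := by
        intro U hU
        simp only [misSet, Finset.mem_filter, Finset.mem_powerset, Finset.subset_empty] at hU
        simp [hU.1]
      have h1 : (misSet adj ∅).card ≤ 1 := by
        simpa using Finset.card_le_card hsub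
      have h2 : ((misSet adj ∅).card : ℝ) ≤ 1 := by exact_mod_cast h1
      simpa using h2
    · obtain ⟨v, hvV, hmin⟩ := V.exists_min_image (fun w => (nbhd adj V w).card) hV
      set Nv := nbhd adj V v with hNvdef
      have hNvV : Nv ⊆ V := Finset.filter_subset _ _
      have hcover : misSet adj V ⊆
          Nv.biUnion (fun u => (misSet adj (V \ nbhd adj V u)).image (insert u)) := by
        intro U hU
        have hU' := hU
        simp only [misSet, Finset.mem_filter, Finset.mem_powerset] at hU'
        obtain ⟨hUV, hind, hdom⟩ := hU'
        have hex : ∃ u, u ∈ U ∧ u ∈ Nv := by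
          by_cases hv : v ∈ U
          · exact ⟨v, hv, by simp [hNvdef, nbhd, hvV]⟩
          · obtain ⟨u, huU, hadj⟩ := hdom v hvV hv
            exact ⟨u, huU, by simp [hNvdef, nbhd, hUV huU, hs u v hadj]⟩
        obtain ⟨u, huU, huNv⟩ := hex
        have huV : u ∈ V := hUV huU
        refine Finset.mem_biUnion.mpr ⟨u, huNv, Finset.mem_image.mpr
          ⟨U.erase u, ?_, Finset.insert_erase huU⟩⟩
        simp only [misSet, Finset.mem_filter, Finset.mem_powerset]
        refine ⟨?_, ?_, ?_⟩
        · intro w hw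
          have hwU := Finset.mem_of_mem_erase hw
          have hwu := Finset.ne_of_mem_erase hw
          rw [Finset.mem_sdiff]
          refine ⟨hUV hwU, ?_⟩
          simp only [nbhd, Finset.mem_filter, not_and, not_or]
          intro _
          exact ⟨hind u huU w hwU, hwu⟩
        · intro a ha b hb
          exact hind a (Finset.mem_of_mem_erase ha) b (Finset.mem_of_mem_erase hb)
        · intro w hwVd hwE
          rw [Finset.mem_sdiff] at hwVd
          obtain ⟨hwV, hwNu⟩ := hwVd
          have hwu : w ≠ u := by
            rintro rfl
            exact hwNu (by simp [nbhd, hwV])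
          have hwU : w ∉ U := fun h => hwE (Finset.mem_erase.mpr ⟨hwu, h⟩)
          obtain ⟨x, hxU, hxw⟩ := hdom w hwV hwU
          have hxu : x ≠ u := by
            rintro rfl
            exact hwNu (by simp [nbhd, hwV, hxw])
          exact ⟨x, Finset.mem_erase.mpr ⟨hxu, hxU⟩, hxw⟩
      set n := V.card with hn
      set k := Nv.card with hk
      have hk_le_n : k ≤ n := Finset.card_le_card hNvV
      have hterm : ∀ u ∈ Nv,
          ((misSet adj (V \ nbhd adj V u)).card : ℝ) ≤ 3 ^ (((n:ℝ) - k) / 3) := by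
        intro u hu
        have huV : u ∈ V := hNvV hu
        have hNuV : nbhd adj V u ⊆ V := Finset.filter_subset _ _
        have huNu : u ∈ nbhd adj V u := by simp [nbhd, huV]
        have hss : V \ nbhd adj V u ⊂ V := Finset.sdiff_ssubset hNuV ⟨u, huNu⟩
        have h1 := ih _ hss
        have hcard : (V \ nbhd adj V u).card = n - (nbhd adj V u).card :=
          Finset.card_sdiff_of_subset hNuV
        have hkle : k ≤ (nbhd adj V u).card := hmin u huV
        have h2 : ((V \ nbhd adj V u).card : ℝ) ≤ (n:ℝ) - k := by
          rw [hcard, Nat.cast_sub (Finset.card_le_card hNuV)]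
          have : (k:ℝ) ≤ ((nbhd adj V u).card : ℝ) := by exact_mod_cast hkle
          linarith
        exact h1.trans (Real.rpow_le_rpow_of_exponent_le (by norm_num) (by linarith))
      have hsum : ((misSet adj V).card : ℝ) ≤ k * 3 ^ (((n:ℝ) - k) / 3) := by
        have h0 : (misSet adj V).card ≤
            ∑ u ∈ Nv, (misSet adj (V \ nbhd adj V u)).card :=
          (Finset.card_le_card hcover).trans (Finset.card_biUnion_le.trans
            (Finset.sum_le_sum fun u _ => Finset.card_image_le))
        calc ((misSet adj V).card : ℝ)
            ≤ ∑ u ∈ Nv, ((misSet adj (V \ nbhd adj V u)).card : ℝ) := by exact_mod_cast h0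
          _ ≤ ∑ _u ∈ Nv, (3:ℝ) ^ (((n:ℝ) - k) / 3) := Finset.sum_le_sum hterm
          _ = k * 3 ^ (((n:ℝ) - k) / 3) := by rw [Finset.sum_const, nsmul_eq_mul]
      have hkr : (k:ℝ) ≤ 3 ^ ((k:ℝ) / 3) := k_le_rpow k
      calc ((misSet adj V).card : ℝ)
          ≤ k * 3 ^ (((n:ℝ) - k) / 3) := hsum
        _ ≤ 3 ^ ((k:ℝ)/3) * 3 ^ (((n:ℝ) - k) / 3) :=
            mul_le_mul_of_nonneg_right hkr (Real.rpow_nonneg (by norm_num) _)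
        _ = 3 ^ ((n:ℝ)/3) := by
            rw [← Real.rpow_add (by norm_num : (0:ℝ) < 3)]
            congr 1
            ring

-- program structure
def pstep (P : Finset PRule) (a c : ℕ) : Prop :=
  ∃ r ∈ P, r.head = c ∧ a ∈ r.pos ∧ r.neg = ∅

def reach (P : Finset PRule) : ℕ → ℕ → Prop := Relation.ReflTransGen (pstep P)

def D0 (P : Finset PRule) (c : ℕ) : Prop :=
  ∃ r ∈ P, r.pos = ∅ ∧ r.neg = ∅ ∧ reach P r.head c

def arc (P : Finset PRule) (b c : ℕ) : Prop :=
  ∃ r ∈ P, b ∈ r.neg ∧ reach P r.head c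

def negAtoms (P : Finset PRule) : Finset ℕ := P.sup (fun r => r.neg)

noncomputable def goodV (P : Finset PRule) : Finset ℕ :=
  (negAtoms P).filter (fun b => ¬ D0 P b ∧ ¬ arc P b b)

def adjP (P : Finset PRule) (b b' : ℕ) : Prop :=
  b ≠ b' ∧ (arc P b b' ∨ arc P b' b)

section Lemmas

variable {P : Finset PRule} {M : Finset ℕ}
variable (h2 : ∀ r ∈ P, 1 + r.pos.card + r.neg.card ≤ 2) (hM : isStable P M)

include h2 hM

lemma mem_of_reach {a c : ℕ} (ha : a ∈ M) (hr : reach P a c) : c ∈ M := by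
  induction hr with
  | refl => exact ha
  | tail _ st ih =>
    obtain ⟨r, hrP, hhead, hbpos, hneg⟩ := st
    have hcard := h2 r hrP
    rw [hneg, Finset.card_empty] at hcard
    have hpos1 : r.pos.card ≤ 1 := by omega
    have : r.head ∈ M := by
      apply hM.1 r hrP (by simp [hneg])
      intro x hx
      rw [Finset.mem_coe] at hx
      have hxb := Finset.card_le_one.mp hpos1 x hx _ hbpos
      rw [Finset.mem_coe, hxb]
      exact ih
    rwa [hhead] at this

lemma mem_of_D0 {c : ℕ} (hc : D0 P c) : c ∈ M := by
  obtain ⟨r, hrP, hpos, hneg, hreach⟩ := hc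
  have hh : r.head ∈ M := hM.1 r hrP (by simp [hneg]) (by simp [hpos])
  exact mem_of_reach h2 hM hh hreach

lemma mem_of_arc {b c : ℕ} (hb : b ∉ M) (ha : arc P b c) : c ∈ M := by
  obtain ⟨r, hrP, hbneg, hreach⟩ := ha
  have hcard := h2 r hrP
  have hneg1 : 1 ≤ r.neg.card := Finset.card_pos.mpr ⟨b, hbneg⟩
  have hpos0 : r.pos = ∅ := Finset.card_eq_zero.mp (by omega)
  have hnegc : r.neg.card ≤ 1 := by omega
  have hh : r.head ∈ M := by
    apply hM.1 r hrP _ (by simp [hpos0])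
    intro x hx
    rwa [Finset.card_le_one.mp hnegc x hx _ hbneg]
  exact mem_of_reach h2 hM hh hreach

omit h2 in
lemma support : ∀ a ∈ M, D0 P a ∨ ∃ b ∈ negAtoms P, b ∉ M ∧ arc P b a := by
  have hcl : closedUnder P M
      {a | D0 P a ∨ ∃ b ∈ negAtoms P, b ∉ M ∧ arc P b a} := by
    intro r hrP hneg hpos
    rcases r.neg.eq_empty_or_nonempty with hne | ⟨b, hb⟩
    · rcases r.pos.eq_empty_or_nonempty with hpe | ⟨a, ha⟩
      · exact Or.inl ⟨r, hrP, hpe, hne, Relation.ReflTransGen.refl⟩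
      · have haN := hpos (Finset.mem_coe.mpr ha)
        have hstep : pstep P a r.head := ⟨r, hrP, rfl, ha, hne⟩
        rcases haN with ⟨r', hr', hp', hn', hre⟩ | ⟨b, hbB, hbM, r', hr', hbn', hre⟩
        · exact Or.inl ⟨r', hr', hp', hn', hre.tail hstep⟩
        · exact Or.inr ⟨b, hbB, hbM, r', hr', hbn', hre.tail hstep⟩
    · refine Or.inr ⟨b, ?_, hneg b hb, ⟨r, hrP, hb, Relation.ReflTransGen.refl⟩⟩
      exact Finset.mem_sup.mpr ⟨r, hrP, hb⟩
  intro a ha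
  exact hM.2 _ hcl (Finset.mem_coe.mpr ha)

end Lemmas

lemma stable_eq_of_inter {P : Finset PRule} {M M' : Finset ℕ}
    (hM : isStable P M) (hM' : isStable P M')
    (h : ∀ b ∈ negAtoms P, (b ∈ M ↔ b ∈ M')) : M = M' := by
  have key : ∀ r ∈ P, (∀ b ∈ r.neg, b ∉ M) ↔ (∀ b ∈ r.neg, b ∉ M') := by
    intro r hr
    constructor <;> intro hh b hb <;>
      have hB : b ∈ negAtoms P := Finset.mem_sup.mpr ⟨r, hr, hb⟩
    · exact fun hc => hh b hb ((h b hB).mpr hc)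
    · exact fun hc => hh b hb ((h b hB).mp hc)
  have c1 : closedUnder P M ↑M' := fun r hr hneg hpos =>
    hM'.1 r hr ((key r hr).mp hneg) hpos
  have c2 : closedUnder P M' ↑M := fun r hr hneg hpos =>
    hM.1 r hr ((key r hr).mpr hneg) hpos
  have s1 : (↑M : Set ℕ) ⊆ ↑M' := hM.2 _ c1
  have s2 : (↑M' : Set ℕ) ⊆ ↑M := hM'.2 _ c2
  exact Finset.coe_injective (subset_antisymm s1 s2)



/-- Every normal 2-program `P` (each rule has at most 2 atom occurrences in total) with
`n = |At(P)|` atoms has at most `3^(n/3)` stable models. -/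
theorem two_program_stable_models_bound (P : Finset PRule)
    (h2 : ∀ r ∈ P, 1 + r.pos.card + r.neg.card ≤ 2) :
    (({M : Finset ℕ | isStable P M}.ncard : ℝ)) ≤
      (3 : ℝ) ^ (((pAtoms P).card : ℝ) / 3) := by
  set S : Set (Finset ℕ) := {M | isStable P M} with hS
  set V : Finset ℕ := goodV P with hV
  -- symmetry of adjP
  have hsym : ∀ a b, adjP P a b → adjP P b a := by
    rintro a b ⟨hne, hor⟩
    exact ⟨hne.symm, hor.symm⟩
  -- membership of the image in misSet
  have hmem : ∀ M ∈ S, V \ M ∈ misSet (adjP P) V := by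
    intro M hMS
    have hM : isStable P M := hMS
    simp only [misSet, Finset.mem_filter, Finset.mem_powerset]
    refine ⟨Finset.sdiff_subset, ?_, ?_⟩
    · rintro a ha b hb ⟨hne, hor⟩
      rw [Finset.mem_sdiff] at ha hb
      rcases hor with harc | harc
      · exact hb.2 (mem_of_arc h2 hM ha.2 harc)
      · exact ha.2 (mem_of_arc h2 hM hb.2 harc)
    · intro w hwV hwU
      have hwM : w ∈ M := by
        by_contra hwM
        exact hwU (Finset.mem_sdiff.mpr ⟨hwV, hwM⟩)
      have hwV' := hwV
      rw [hV, goodV, Finset.mem_filter] at hwV'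
      obtain ⟨hwB, hwD0, hwarc⟩ := hwV'
      rcases support hM w hwM with hD | ⟨b, hbB, hbM, harc⟩
      · exact absurd hD hwD0
      · have hbV : b ∈ V := by
          rw [hV, goodV, Finset.mem_filter]
          refine ⟨hbB, fun hD => hbM (mem_of_D0 h2 hM hD),
            fun ha => hbM (mem_of_arc h2 hM hbM ha)⟩
        have hbw : b ≠ w := fun h => hbM (h ▸ hwM)
        exact ⟨b, Finset.mem_sdiff.mpr ⟨hbV, hbM⟩, hbw, Or.inl harc⟩
  -- injectivity
  have hinj : S.InjOn (fun M => V \ M) := by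
    intro M hMS M' hMS' heq
    have hM : isStable P M := hMS
    have hM' : isStable P M' := hMS'
    apply stable_eq_of_inter hM hM'
    intro b hbB
    by_cases hD : D0 P b
    · simp [mem_of_D0 h2 hM hD, mem_of_D0 h2 hM' hD]
    by_cases ha : arc P b b
    · have hb1 : b ∈ M := by
        by_contra hb
        exact hb (mem_of_arc h2 hM hb ha)
      have hb2 : b ∈ M' := by
        by_contra hb
        exact hb (mem_of_arc h2 hM' hb ha)
      simp [hb1, hb2]
    · have hbV : b ∈ V := by
        rw [hV, goodV, Finset.mem_filter]
        exact ⟨hbB, hD, ha⟩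
      have e1 : (b ∈ M) ↔ b ∉ V \ M := by simp [Finset.mem_sdiff, hbV]
      have e2 : (b ∈ M') ↔ b ∉ V \ M' := by simp [Finset.mem_sdiff, hbV]
      rw [e1, e2, show V \ M = V \ M' from heq]
  -- counting
  have himg : (fun M => V \ M) '' S ⊆ ↑(misSet (adjP P) V) := by
    rintro _ ⟨M, hMS, rfl⟩
    exact Finset.mem_coe.mpr (hmem M hMS)
  have h1 : S.ncard ≤ (misSet (adjP P) V).card := by
    rw [← Set.ncard_coe_finset, ← Set.ncard_image_of_injOn hinj]
    exact Set.ncard_le_ncard himg (Finset.finite_toSet _)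
  have hVn : V.card ≤ (pAtoms P).card := by
    apply Finset.card_le_card
    intro b hb
    rw [hV, goodV, Finset.mem_filter] at hb
    obtain ⟨hbB, _⟩ := hb
    rw [negAtoms, Finset.mem_sup] at hbB
    obtain ⟨r, hr, hbr⟩ := hbB
    rw [pAtoms, Finset.mem_sup]
    exact ⟨r, hr, by simp [hbr]⟩
  calc (S.ncard : ℝ) ≤ ((misSet (adjP P) V).card : ℝ) := by exact_mod_cast h1
    _ ≤ 3 ^ ((V.card : ℝ) / 3) := moon_moser (adjP P) hsym V
    _ ≤ 3 ^ (((pAtoms P).card : ℝ) / 3) := by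
        apply Real.rpow_le_rpow_of_exponent_le (by norm_num)
        have : (V.card : ℝ) ≤ ((pAtoms P).card : ℝ) := by exact_mod_cast hVn
        linarith
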